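/- arXiv:2109.05728 — 13 statements merged into one kernel-verified Lean document; each statement's English description precedes it below -/
import Mathlib

section
/- Let (M,d) be an ultrametric space and let A be a nonempty spherically complete subspace of M. Then A is proximinal in M; that is, for every x ∈ M there exists a₀ ∈ A with d(x,a₀) = dist(x,A). -/
open Metric

variable {M : Type*} [MetricSpace M]

/-- A subset `A` of a metric space is *spherically complete* (as a subspace) if every nested
decreasing sequence of closed balls of the subspace `A` has nonempty intersection. -/
def SphericallyCompleteSet (A : Set M) : Prop :=
  ∀ (c : ℕ → M) (r : ℕ → ℝ), (∀ n, c n ∈ A) → (∀ n, 0 ≤ r n) →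
    (∀ n, A ∩ closedBall (c (n + 1)) (r (n + 1)) ⊆ A ∩ closedBall (c n) (r n)) →
    (A ∩ ⋂ n, closedBall (c n) (r n)).Nonempty

/-- A metric space is *spherically complete* if every nested decreasing sequence of closed
balls has nonempty intersection. -/
def SphericallyCompleteSpace (M : Type*) [MetricSpace M] : Prop :=
  ∀ (c : ℕ → M) (r : ℕ → ℝ), (∀ n, 0 ≤ r n) →
    (∀ n, closedBall (c (n + 1)) (r (n + 1)) ⊆ closedBall (c n) (r n)) →
    (⋂ n, closedBall (c n) (r n)).Nonempty

/-- `dist(A, B) = inf {d(a,b) : a ∈ A, b ∈ B}`. -/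
noncomputable def setDist (A B : Set M) : ℝ :=
  sInf {t : ℝ | ∃ a ∈ A, ∃ b ∈ B, dist a b = t}

/-- A subset `A` is *proximinal* if every point of `M` has a best approximation in `A`. -/
def IsProximinal (A : Set M) : Prop :=
  ∀ x : M, ∃ a ∈ A, dist x a = infDist x A

/-- `A₀ = {x ∈ A : d(x,y) = dist(A,B) for some y ∈ B}`. -/
noncomputable def proxA (A B : Set M) : Set M :=
  {x ∈ A | ∃ y ∈ B, dist x y = setDist A B}

/-- `B₀ = {y ∈ B : d(x,y) = dist(A,B) for some x ∈ A}`. -/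
noncomputable def proxB (A B : Set M) : Set M :=
  {y ∈ B | ∃ x ∈ A, dist x y = setDist A B}

/-- The closed ball `B(c,r)`, `r > 0`, is a *minimal `F`-invariant ball* if `F(B) ⊆ B`
and `d(y, F(y)) = r` for each `y ∈ B`. -/
def IsMinimalInvariantBall (F : M → M) (c : M) (r : ℝ) : Prop :=
  0 < r ∧ Set.MapsTo F (closedBall c r) (closedBall c r) ∧
    ∀ y ∈ closedBall c r, dist y (F y) = r

/-- **Theorem (Kirk–Shahzad).** A nonempty spherically complete subspace `A` of an
ultrametric space `M` is proximinal in `M`. -/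
theorem proximinal_of_sphericallyComplete {M : Type*} [MetricSpace M] [IsUltrametricDist M]
    (A : Set M) (hA : A.Nonempty) (hsc : SphericallyCompleteSet A) :
    IsProximinal A := by
  classical
  intro x
  set d := infDist x A with hd
  have hd0 : 0 ≤ d := infDist_nonneg
  have key : ∀ n : ℕ, ∃ a ∈ A, dist x a < d + 1 / (n + 1) := by
    intro n
    have h1 : (0:ℝ) < 1 / (n + 1) := by positivity
    have : d < d + 1 / (n + 1) := by linarith
    exact (infDist_lt_iff hA).mp this
  choose g hgA hgd using key
  let a : ℕ → M := fun n =>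
    Nat.rec (g 0) (fun n an => if dist x an ≤ d + 1 / (n + 2) then an else g (n + 1)) n
  have ha0 : a 0 = g 0 := rfl
  have hasucc : ∀ n, a (n + 1) = if dist x (a n) ≤ d + 1 / (n + 2) then a n else g (n + 1) :=
    fun n => rfl
  have haA : ∀ n, a n ∈ A := by
    intro n
    induction n with
    | zero => exact hgA 0
    | succ n ih =>
      rw [hasucc]
      split
      · exact ih
      · exact hgA (n + 1)
  have hbound : ∀ n, dist x (a n) ≤ d + 1 / (n + 1) := by
    intro n
    cases n with
    | zero => exact le_of_lt (by simpa [ha0] using hgd 0)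
    | succ n =>
      rw [hasucc]
      split
      · next h => exact_mod_cast h
      · exact_mod_cast le_of_lt (hgd (n + 1))
  have hmono : ∀ n, dist x (a (n + 1)) ≤ dist x (a n) := by
    intro n
    rw [hasucc]
    split
    · exact le_rfl
    · next h =>
      push_neg at h
      exact le_of_lt (lt_trans (by exact_mod_cast hgd (n + 1)) h)
  set r : ℕ → ℝ := fun n => dist x (a n) with hr
  have hr0 : ∀ n, 0 ≤ r n := fun n => dist_nonneg
  have hnest : ∀ n, A ∩ closedBall (a (n + 1)) (r (n + 1)) ⊆ A ∩ closedBall (a n) (r n) := by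
    intro n z hz
    refine ⟨hz.1, ?_⟩
    have hz2 : dist z (a (n + 1)) ≤ r (n + 1) := mem_closedBall.mp hz.2
    have h1 : dist (a (n + 1)) (a n) ≤ max (dist (a (n + 1)) x) (dist x (a n)) :=
      IsUltrametricDist.dist_triangle_max _ _ _
    have h2 : dist (a (n + 1)) x = r (n + 1) := dist_comm (a (n+1)) x ▸ rfl
    have h3 : dist (a (n + 1)) (a n) ≤ r n := by
      rw [h2] at h1
      exact h1.trans (max_le (hmono n) le_rfl)
    have h4 : dist z (a n) ≤ max (dist z (a (n + 1))) (dist (a (n + 1)) (a n)) :=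
      IsUltrametricDist.dist_triangle_max _ _ _
    exact mem_closedBall.mpr (h4.trans (max_le (hz2.trans (hmono n)) h3))
  obtain ⟨b, hbA, hb⟩ := hsc a r haA hr0 hnest
  refine ⟨b, hbA, ?_⟩
  have hble : ∀ n, dist b (a n) ≤ r n := by
    intro n
    have := Set.mem_iInter.mp hb n
    exact mem_closedBall.mp this
  have hub : ∀ n : ℕ, dist x b ≤ d + 1 / (n + 1) := by
    intro n
    have h1 : dist x b ≤ max (dist x (a n)) (dist (a n) b) :=
      IsUltrametricDist.dist_triangle_max _ _ _
    have h2 : dist (a n) b = dist b (a n) := dist_comm _ _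
    have := h1.trans (max_le (hbound n) ((h2 ▸ hble n).trans (hbound n)))
    exact this
  have hle : dist x b ≤ d := by
    by_contra h
    push_neg at h
    obtain ⟨n, hn⟩ := exists_nat_one_div_lt (by linarith : 0 < dist x b - d)
    have := hub n
    push_cast at this hn
    linarith
  exact le_antisymm hle (infDist_le_dist_of_mem hbA)
end

section
/- Let (M,d) be a spherically complete ultrametric space and let F : M → M be a nonexpansive map. Then for every x ∈ M, the closed ball B(x, d(x,F(x))) = {y ∈ M : d(x,y) ≤ d(x,F(x))} contains either a fixed point of F or a minimal F-invariant ball. -/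
open Metric

variable {M : Type*} [MetricSpace M]

/-- **Theorem (Kirk–Shahzad).** In a spherically complete ultrametric space, for a
nonexpansive `F : M → M`, every closed ball `B(x, d(x, F x))` contains either a fixed
point of `F` or a minimal `F`-invariant ball. -/
theorem fixedPoint_or_minimalInvariantBall {M : Type*} [MetricSpace M] [IsUltrametricDist M]
    (hM : SphericallyCompleteSpace M) (F : M → M)
    (hF : ∀ x y : M, dist (F x) (F y) ≤ dist x y) (x : M) :
    (∃ p ∈ closedBall x (dist x (F x)), F p = p) ∨
      (∃ c : M, ∃ r : ℝ, IsMinimalInvariantBall F c r ∧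
        closedBall c r ⊆ closedBall x (dist x (F x))) := by

  classical
  set r : M → ℝ := fun y => dist y (F y) with hr
  -- key lemma: if z is in B(y, r y) then r z ≤ r y
  have key : ∀ y z : M, z ∈ closedBall y (r y) → r z ≤ r y := by
    intro y z hz
    rw [mem_closedBall] at hz
    have h1 : dist z (F y) ≤ r y := by
      refine le_trans (IsUltrametricDist.dist_triangle_max z y (F y)) (max_le hz le_rfl)
    have h2 : dist (F y) (F z) ≤ r y := by
      refine le_trans (hF y z) ?_
      rw [dist_comm]; exact hz
    exact le_trans (IsUltrametricDist.dist_triangle_max z (F y) (F z)) (max_le h1 h2)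
  -- ball nesting lemma
  have bsub : ∀ y z : M, z ∈ closedBall y (r y) → closedBall z (r z) ⊆ closedBall y (r y) := by
    intro y z hz w hw
    rw [mem_closedBall] at hz hw ⊢
    refine le_trans (IsUltrametricDist.dist_triangle_max w z y) (max_le ?_ hz)
    exact le_trans hw (key y z hz)
  set ρ : M → ℝ := fun y => sInf (r '' closedBall y (r y)) with hρ
  have hbdd : ∀ y : M, BddBelow (r '' closedBall y (r y)) := by
    intro y
    refine ⟨0, ?_⟩
    rintro t ⟨z, _, rfl⟩
    exact dist_nonneg
  have hne : ∀ y : M, (r '' closedBall y (r y)).Nonempty := by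
    intro y
    exact ⟨r y, y, mem_closedBall_self dist_nonneg, rfl⟩
  have hρ_le : ∀ y z : M, z ∈ closedBall y (r y) → ρ y ≤ r z := by
    intro y z hz
    exact csInf_le (hbdd y) ⟨z, hz, rfl⟩
  have hex : ∀ (y : M) (ε : ℝ), 0 < ε → ∃ z, z ∈ closedBall y (r y) ∧ r z < ρ y + ε := by
    intro y ε hε
    obtain ⟨t, ht, hlt⟩ := exists_lt_of_csInf_lt (hne y) (lt_add_of_pos_right (ρ y) hε)
    obtain ⟨z, hz, rfl⟩ := ht
    exact ⟨z, hz, hlt⟩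
  -- construct the sequence
  let s : ℕ → M := fun n => Nat.rec x
    (fun n y => (hex y ((2:ℝ)⁻¹ ^ n) (by positivity)).choose) n
  have hs0 : s 0 = x := rfl
  have hss : ∀ n, s (n+1) ∈ closedBall (s n) (r (s n)) ∧
      r (s (n+1)) < ρ (s n) + (2:ℝ)⁻¹ ^ n := fun n =>
    (hex (s n) ((2:ℝ)⁻¹ ^ n) (by positivity)).choose_spec
  have hnest : ∀ n, closedBall (s (n+1)) (r (s (n+1))) ⊆ closedBall (s n) (r (s n)) :=
    fun n => bsub _ _ (hss n).1
  obtain ⟨c, hc⟩ := hM s (fun n => r (s n)) (fun n => dist_nonneg) hnest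
  have hcn : ∀ n, c ∈ closedBall (s n) (r (s n)) := Set.mem_iInter.mp hc
  have hcx : c ∈ closedBall x (dist x (F x)) := hcn 0
  by_cases h0 : dist c (F c) = 0
  · left
    exact ⟨c, hcx, (dist_eq_zero.mp h0).symm⟩
  · right
    have hpos : 0 < r c := lt_of_le_of_ne dist_nonneg (Ne.symm h0)
    have hle : ∀ y ∈ closedBall c (r c), r y ≤ r c := fun y hy => key c y hy
    have hge : ∀ y ∈ closedBall c (r c), r c ≤ r y := by
      intro y hy
      refine le_of_forall_pos_le_add ?_
      intro ε hε
      obtain ⟨n, hn⟩ : ∃ n : ℕ, (2:ℝ)⁻¹ ^ n < ε :=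
        exists_pow_lt_of_lt_one hε (by norm_num)
      have h2 : r c ≤ r (s (n+1)) := key _ _ (hcn (n+1))
      have h3 : y ∈ closedBall (s n) (r (s n)) := bsub _ _ (hcn n) hy
      have h4 : ρ (s n) ≤ r y := hρ_le _ _ h3
      have h5 := (hss n).2
      linarith
    refine ⟨c, r c, ⟨hpos, ?_, fun y hy => le_antisymm (hle y hy) (hge y hy)⟩,
      bsub x c hcx⟩
    intro y hy
    rw [mem_closedBall, dist_comm]
    refine le_trans (IsUltrametricDist.dist_triangle_max c y (F y)) (max_le ?_ (hle y hy))
    rw [mem_closedBall] at hy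
    rw [dist_comm]; exact hy
end

section
/- Let (M,d) be a spherically complete ultrametric space and let F : M → M be a nonexpansive map such that for every x ∈ M with x ≠ F(x) one has liminf_{n→∞} d(Fⁿ(x), Fⁿ⁺¹(x)) < d(x, F(x)). Then F has a fixed point in every F-invariant closed ball; that is, every closed ball B with F(B) ⊆ B contains a point p with F(p) = p. -/
open Metric

variable {M : Type*} [MetricSpace M]

open Filter in
/-- In a spherically complete ultrametric space, a nonexpansive map `F` satisfying
`liminf_{n→∞} d(Fⁿ x, Fⁿ⁺¹ x) < d(x, F x)` whenever `x ≠ F x` has a fixed point in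
every `F`-invariant closed ball. -/
theorem fixedPoint_in_invariant_ball {M : Type*} [MetricSpace M] [IsUltrametricDist M]
    (hM : SphericallyCompleteSpace M) (F : M → M)
    (hF : ∀ x y : M, dist (F x) (F y) ≤ dist x y)
    (hliminf : ∀ x : M, x ≠ F x →
      liminf (fun n : ℕ => dist (F^[n] x) (F^[n + 1] x)) atTop < dist x (F x))
    (c : M) (r : ℝ) (hr : 0 ≤ r)
    (hinv : Set.MapsTo F (closedBall c r) (closedBall c r)) :
    ∃ p ∈ closedBall c r, F p = p := by
  classical
  set ρ : M → ℝ := fun x => dist x (F x) with hρdef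
  have hρ0 : ∀ x, 0 ≤ ρ x := fun x => dist_nonneg
  have ult : ∀ a b c : M, dist a c ≤ max (dist a b) (dist b c) :=
    fun a b c => IsUltrametricDist.dist_triangle_max a b c
  have hmaps : ∀ x : M, Set.MapsTo F (closedBall x (ρ x)) (closedBall x (ρ x)) := by
    intro x y hy
    simp only [mem_closedBall] at *
    calc dist (F y) x ≤ max (dist (F y) (F x)) (dist (F x) x) := ult _ _ _
      _ ≤ max (dist y x) (ρ x) :=
        max_le_max (hF y x) (by simp [hρdef, dist_comm])
      _ ≤ ρ x := max_le hy le_rfl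
  have hρ_le : ∀ x y : M, y ∈ closedBall x (ρ x) → ρ y ≤ ρ x := by
    intro x y hy
    simp only [mem_closedBall] at hy
    have h1 : dist y (F y) ≤ max (dist y (F x)) (dist (F x) (F y)) := ult _ _ _
    have h2 : dist y (F x) ≤ max (dist y x) (dist x (F x)) := ult _ _ _
    have h3 : dist (F x) (F y) ≤ dist x y := hF x y
    have h4 : dist x y ≤ ρ x := by rwa [dist_comm]
    calc ρ y = dist y (F y) := rfl
      _ ≤ max (max (dist y x) (dist x (F x))) (dist x y) :=
        h1.trans (max_le_max h2 h3)
      _ ≤ ρ x := by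
        apply max_le (max_le hy le_rfl) h4
  have hnested : ∀ x y : M, y ∈ closedBall x (ρ x) →
      closedBall y (ρ y) ⊆ closedBall x (ρ x) := by
    intro x y hy z hz
    simp only [mem_closedBall] at *
    calc dist z x ≤ max (dist z y) (dist y x) := ult _ _ _
      _ ≤ ρ x := max_le (hz.trans (hρ_le x y (by simpa [mem_closedBall]))) hy
  have hiter : ∀ (x : M) (n : ℕ), F^[n] x ∈ closedBall x (ρ x) := by
    intro x n
    induction n with
    | zero => exact mem_closedBall_self (hρ0 x)
    | succ n ih =>
      rw [Function.iterate_succ_apply']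
      exact hmaps x ih
  -- infimum of ρ on a ball
  set m : M → ℝ := fun x => sInf (ρ '' closedBall x (ρ x)) with hmdef
  have hm_le : ∀ x y : M, y ∈ closedBall x (ρ x) → m x ≤ ρ y := by
    intro x y hy
    refine csInf_le ⟨0, ?_⟩ ⟨y, hy, rfl⟩
    rintro t ⟨z, -, rfl⟩
    exact hρ0 z
  -- step existence
  have hstep : ∀ (x : M) (k : ℕ),
      ∃ y, y ∈ closedBall x (ρ x) ∧ ρ y < m x + (1/2 : ℝ) ^ k := by
    intro x k
    have hne : (ρ '' closedBall x (ρ x)).Nonempty :=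
      ⟨ρ x, x, mem_closedBall_self (hρ0 x), rfl⟩
    obtain ⟨t, ht, hlt⟩ := Real.lt_sInf_add_pos hne (by positivity : (0:ℝ) < (1/2:ℝ)^k)
    obtain ⟨y, hy, rfl⟩ := ht
    exact ⟨y, hy, hlt⟩
  -- the sequence
  set seq : ℕ → M := fun k => Nat.rec c (fun k xk => Classical.choose (hstep xk k)) k
    with hseqdef
  have hseq0 : seq 0 = c := rfl
  have hseqS : ∀ k, seq (k+1) = Classical.choose (hstep (seq k) k) := fun k => rfl
  have hseq_mem : ∀ k, seq (k+1) ∈ closedBall (seq k) (ρ (seq k)) := by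
    intro k; rw [hseqS]; exact (Classical.choose_spec (hstep (seq k) k)).1
  have hseq_lt : ∀ k, ρ (seq (k+1)) < m (seq k) + (1/2:ℝ)^k := by
    intro k; rw [hseqS]; exact (Classical.choose_spec (hstep (seq k) k)).2
  have hsub : ∀ k, closedBall (seq (k+1)) (ρ (seq (k+1))) ⊆ closedBall (seq k) (ρ (seq k)) :=
    fun k => hnested _ _ (hseq_mem k)
  obtain ⟨p, hp⟩ := hM seq (fun k => ρ (seq k)) (fun k => hρ0 _) hsub
  simp only [Set.mem_iInter] at hp
  refine ⟨p, ?_, ?_⟩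
  · -- p ∈ closedBall c r
    have hρc : ρ c ≤ r := by
      have : F c ∈ closedBall c r := hinv (mem_closedBall_self hr)
      simpa [hρdef, dist_comm] using this
    have := hp 0
    rw [hseq0] at this
    exact closedBall_subset_closedBall hρc this
  · -- fixed point
    by_contra hne
    have hne' : p ≠ F p := fun h => hne h.symm
    have hpos : 0 < ρ p := dist_pos.2 hne'
    have hlim := hliminf p hne'
    have hbdd : IsBoundedUnder (· ≤ ·) atTop
        (fun n : ℕ => dist (F^[n] p) (F^[n+1] p)) := by
      refine ⟨ρ p, Filter.eventually_map.2 (Filter.Eventually.of_forall fun n => ?_)⟩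
      have := hρ_le p (F^[n] p) (hiter p n)
      simpa [hρdef, Function.iterate_succ_apply'] using this
    obtain ⟨n, hn⟩ := (Filter.frequently_lt_of_liminf_lt hbdd.isCoboundedUnder_ge hlim).exists
    rw [Function.iterate_succ_apply'] at hn
    set q := F^[n] p with hq
    have hρq : ρ q < ρ p := hn
    -- q lies in every ball of the sequence
    have hq_mem : ∀ k, q ∈ closedBall (seq k) (ρ (seq k)) := by
      intro k
      rw [hq]
      have : ∀ j, F^[j] p ∈ closedBall (seq k) (ρ (seq k)) := by
        intro j
        induction j with
        | zero => exact hp k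
        | succ j ih => rw [Function.iterate_succ_apply']; exact hmaps _ ih
      exact this n
    -- ρ p ≤ ρ q + (1/2)^k for all k
    have key : ∀ k, ρ p ≤ ρ q + (1/2:ℝ)^k := by
      intro k
      have h1 : ρ p ≤ ρ (seq (k+1)) := hρ_le _ _ (hp (k+1))
      have h2 : m (seq k) ≤ ρ q := hm_le _ _ (hq_mem k)
      linarith [hseq_lt k]
    have : ρ p ≤ ρ q := by
      refine le_of_forall_pos_le_add fun ε hε => ?_
      obtain ⟨k, hk⟩ := exists_pow_lt_of_lt_one hε (by norm_num : (1/2:ℝ) < 1)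
      exact (key k).trans (by linarith)
    linarith
end

section
/- Let (M,d) be a nonempty ultrametric space and let (A,B) be a proximinal pair of nonempty subsets of M such that δ(B) ≤ dist(A,B). Then the set A₀ is nonempty and the equality B₀ = B holds. -/
open Metric

variable {M : Type*} [MetricSpace M]

/-- **Lemma 1.** If `(A,B)` is a proximinal pair of nonempty subsets of a nonempty
ultrametric space and `δ(B) ≤ dist(A,B)`, then `A₀` is nonempty and `B₀ = B`. -/
theorem proxA_nonempty_and_proxB_eq {M : Type*} [MetricSpace M] [IsUltrametricDist M]
    [Nonempty M] (A B : Set M) (hA : A.Nonempty) (hB : B.Nonempty)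
    (hAprox : IsProximinal A) (hBprox : IsProximinal B)
    (hδ : ∀ x ∈ B, ∀ y ∈ B, dist x y ≤ setDist A B) :
    (proxA A B).Nonempty ∧ proxB A B = B := by
  have hbdd : BddBelow {t : ℝ | ∃ a ∈ A, ∃ b ∈ B, dist a b = t} := by
    refine ⟨0, ?_⟩
    rintro t ⟨a, -, b, -, rfl⟩
    exact dist_nonneg
  have key : ∀ b ∈ B, ∃ a ∈ A, dist a b = setDist A B := by
    intro b hbB
    obtain ⟨a, haA, hd⟩ := hAprox b
    have h1 : ∀ a' ∈ A, ∀ b' ∈ B, dist a b ≤ dist a' b' := by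
      intro a' ha' b' hb'
      have hub : dist b a' ≤ max (dist b b') (dist b' a') :=
        IsUltrametricDist.dist_triangle_max b b' a'
      have hbb' : dist b b' ≤ setDist A B := hδ b hbB b' hb'
      have hsd : setDist A B ≤ dist a' b' :=
        csInf_le hbdd ⟨a', ha', b', hb', rfl⟩
      have h2 : dist b a' ≤ dist a' b' := by
        rw [dist_comm a' b']
        exact hub.trans (max_le (hbb'.trans (hsd.trans_eq (dist_comm a' b'))) le_rfl)
      calc dist a b = infDist b A := by rw [dist_comm]; exact hd
        _ ≤ dist b a' := infDist_le_dist_of_mem ha'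
        _ ≤ dist a' b' := h2
    refine ⟨a, haA, le_antisymm ?_ (csInf_le hbdd ⟨a, haA, b, hbB, rfl⟩)⟩
    refine le_csInf ⟨dist a b, a, haA, b, hbB, rfl⟩ ?_
    rintro t ⟨a', ha', b', hb', rfl⟩
    exact h1 a' ha' b' hb'
  constructor
  · obtain ⟨b, hbB⟩ := hB
    obtain ⟨a, haA, hab⟩ := key b hbB
    exact ⟨a, haA, b, hbB, hab⟩
  · ext y
    constructor
    · rintro ⟨hy, -⟩; exact hy
    · intro hy
      obtain ⟨a, haA, hab⟩ := key y hy
      exact ⟨hy, a, haA, hab⟩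
end

section
/- Let (M,d) be a nonempty ultrametric space, let (A,B) be a proximinal pair of nonempty subsets of M with δ(B) ≤ dist(A,B), let b₀ ∈ B be arbitrary and write r = dist(A,B). Then A₀ = A ∩ S(b₀, r), where S(b₀,r) = {x ∈ M : d(b₀,x) = r} is the sphere with radius r and center b₀. -/
open Metric

variable {M : Type*} [MetricSpace M]

/-- **Lemma 2.3.** Under the assumptions of Lemma 1, for any `b₀ ∈ B` and `r = dist(A,B)`
we have `A₀ = A ∩ S(b₀, r)`, where `S(b₀,r)` is the sphere of radius `r` centered at `b₀`. -/
theorem proxA_eq_inter_sphere {M : Type*} [MetricSpace M] [IsUltrametricDist M]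
    [Nonempty M] (A B : Set M) (hA : A.Nonempty) (hB : B.Nonempty)
    (hAprox : IsProximinal A) (hBprox : IsProximinal B)
    (hδ : ∀ x ∈ B, ∀ y ∈ B, dist x y ≤ setDist A B)
    (b₀ : M) (hb₀ : b₀ ∈ B) :
    proxA A B = A ∩ {x : M | dist b₀ x = setDist A B} := by
  have hbdd : BddBelow {t : ℝ | ∃ a ∈ A, ∃ b ∈ B, dist a b = t} := by
    exact ⟨0, fun t ⟨a, _, b, _, h⟩ => h ▸ dist_nonneg⟩
  have hle : ∀ a ∈ A, ∀ b ∈ B, setDist A B ≤ dist a b := fun a ha b hb =>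
    csInf_le hbdd ⟨a, ha, b, hb, rfl⟩
  ext x
  constructor
  · rintro ⟨hxA, y, hy, hxy⟩
    refine ⟨hxA, le_antisymm ?_ ?_⟩
    · calc dist b₀ x ≤ max (dist b₀ y) (dist y x) := IsUltrametricDist.dist_triangle_max _ _ _
        _ ≤ setDist A B := max_le (hδ b₀ hb₀ y hy) (by rw [dist_comm]; exact hxy.le)
    · have := hle x hxA b₀ hb₀
      rwa [dist_comm] at this
  · rintro ⟨hxA, hx⟩
    exact ⟨hxA, b₀, hb₀, by rw [dist_comm]; exact hx⟩
end

section
/- Let (M,d) be a nonempty ultrametric space, let (A,B) be a proximinal pair of nonempty subsets of M with δ(B) ≤ dist(A,B), let b₀ ∈ B be arbitrary and write r = dist(A,B). Then A₀ = A ∩ B(b₀, r), where B(b₀,r) = {x ∈ M : d(b₀,x) ≤ r} is the closed ball with radius r and center b₀. -/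
open Metric

variable {M : Type*} [MetricSpace M]

/-- Under the assumptions of Lemma 1, for any `b₀ ∈ B` and `r = dist(A,B)` we have
`A₀ = A ∩ B(b₀, r)`, where `B(b₀,r)` is the closed ball of radius `r` centered at `b₀`. -/
theorem proxA_eq_inter_closedBall {M : Type*} [MetricSpace M] [IsUltrametricDist M]
    [Nonempty M] (A B : Set M) (hA : A.Nonempty) (hB : B.Nonempty)
    (hAprox : IsProximinal A) (hBprox : IsProximinal B)
    (hδ : ∀ x ∈ B, ∀ y ∈ B, dist x y ≤ setDist A B)
    (b₀ : M) (hb₀ : b₀ ∈ B) :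
    proxA A B = A ∩ closedBall b₀ (setDist A B) := by
  have hbdd : BddBelow {t : ℝ | ∃ a ∈ A, ∃ b ∈ B, dist a b = t} := by
    refine ⟨0, ?_⟩
    rintro t ⟨a, _, b, _, rfl⟩
    exact dist_nonneg
  have hle : ∀ x ∈ A, ∀ y ∈ B, setDist A B ≤ dist x y := fun x hx y hy =>
    csInf_le hbdd ⟨x, hx, y, hy, rfl⟩
  ext x
  constructor
  · rintro ⟨hxA, y, hyB, hxy⟩
    refine ⟨hxA, ?_⟩
    rw [mem_closedBall]
    calc dist x b₀ ≤ max (dist x y) (dist y b₀) := IsUltrametricDist.dist_triangle_max x y b₀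
      _ ≤ setDist A B := max_le (le_of_eq hxy) (hδ y hyB b₀ hb₀)
  · rintro ⟨hxA, hxball⟩
    exact ⟨hxA, b₀, hb₀, le_antisymm (mem_closedBall.mp hxball) (hle x hxA b₀ hb₀)⟩
end

section
/- Let (M,d) be a nonempty ultrametric space and let (A,B) be a proximinal pair of nonempty subsets of M. Then the following three statements are equivalent: (i) there is a point a′ ∈ A such that d(a′,b) = dist(A,B) for every b ∈ B; (ii) the inequality δ(B) ≤ dist(A,B) holds; (iii) the sets A₀ and B₀ are proximinal subsets of M, the equalities B₀ = B and dist(A₀,B₀) = dist(A,B) hold, and every pair (a,b) ∈ A₀ × B₀ satisfies d(a,b) = dist(A,B) (i.e., is a best proximity pair for both (A,B) and (A₀,B₀)). -/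
open Metric

variable {M : Type*} [MetricSpace M]

lemma setDist_le_dist' {M : Type*} [MetricSpace M] {A B : Set M} {a b : M}
    (ha : a ∈ A) (hb : b ∈ B) : setDist A B ≤ dist a b :=
  csInf_le ⟨0, by rintro t ⟨a, -, b, -, rfl⟩; exact dist_nonneg⟩ ⟨a, ha, b, hb, rfl⟩

lemma le_infDist' {M : Type*} [MetricSpace M] {A : Set M} {x : M} {r : ℝ}
    (hA : A.Nonempty) (h : ∀ a ∈ A, r ≤ dist x a) : r ≤ infDist x A := by
  by_contra hc
  push_neg at hc
  obtain ⟨y, hy, hlt⟩ := (infDist_lt_iff hA).1 hc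
  exact absurd (h y hy) (not_le.2 hlt)


/-- **Theorem 2.5.** For a proximinal pair `(A,B)` of nonempty subsets of a nonempty
ultrametric space, the following are equivalent:
(i) some `a' ∈ A` satisfies `d(a', b) = dist(A,B)` for every `b ∈ B`;
(ii) `δ(B) ≤ dist(A,B)`;
(iii) `A₀` and `B₀` are proximinal, `B₀ = B`, `dist(A₀,B₀) = dist(A,B)`, and every pair
`(a,b) ∈ A₀ × B₀` is a best proximity pair for `(A,B)` (and hence for `(A₀,B₀)`). -/
theorem bestProximity_tfae {M : Type*} [MetricSpace M] [IsUltrametricDist M]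
    [Nonempty M] (A B : Set M) (hA : A.Nonempty) (hB : B.Nonempty)
    (hAprox : IsProximinal A) (hBprox : IsProximinal B) :
    ((∃ a' ∈ A, ∀ b ∈ B, dist a' b = setDist A B) ↔
        (∀ x ∈ B, ∀ y ∈ B, dist x y ≤ setDist A B)) ∧
      ((∀ x ∈ B, ∀ y ∈ B, dist x y ≤ setDist A B) ↔
        (IsProximinal (proxA A B) ∧ IsProximinal (proxB A B) ∧ proxB A B = B ∧
          setDist (proxA A B) (proxB A B) = setDist A B ∧
          ∀ a ∈ proxA A B, ∀ b ∈ proxB A B, dist a b = setDist A B)) := by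
  have utri : ∀ x y z : M, dist x z ≤ max (dist x y) (dist y z) :=
    fun x y z => IsUltrametricDist.dist_triangle_max x y z
  -- under (ii), every point of B has a best approximation in A realizing setDist
  have key : (∀ x ∈ B, ∀ y ∈ B, dist x y ≤ setDist A B) →
      ∀ b ∈ B, ∃ a ∈ A, dist a b = setDist A B := by
    intro hii b hb
    obtain ⟨a, ha, hab⟩ := hAprox b
    refine ⟨a, ha, ?_⟩
    have h1 : setDist A B ≤ dist a b := setDist_le_dist' ha hb
    have h2 : infDist b A ≤ setDist A B := by
      obtain ⟨a₁, ha₁⟩ := hA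
      obtain ⟨b₁, hb₁⟩ := hB
      refine le_csInf ⟨dist a₁ b₁, a₁, ha₁, b₁, hb₁, rfl⟩ ?_
      rintro t ⟨a', ha', b', hb', rfl⟩
      have hbb' : dist b b' ≤ setDist A B := hii b hb b' hb'
      have h3 : dist b a' ≤ dist a' b' := by
        refine (utri b b' a').trans (max_le (hbb'.trans ?_) (by rw [dist_comm])) 
        exact setDist_le_dist' ha' hb'
      exact (infDist_le_dist_of_mem ha').trans h3
    have h4 : dist a b ≤ setDist A B := by
      rw [dist_comm a b, hab]; exact h2
    exact le_antisymm h4 h1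
  have iff2 : (∀ x ∈ B, ∀ y ∈ B, dist x y ≤ setDist A B) ↔
      (IsProximinal (proxA A B) ∧ IsProximinal (proxB A B) ∧ proxB A B = B ∧
        setDist (proxA A B) (proxB A B) = setDist A B ∧
        ∀ a ∈ proxA A B, ∀ b ∈ proxB A B, dist a b = setDist A B) := by
    constructor
    · intro hii
      have hB0 : proxB A B = B := by
        ext y
        refine ⟨fun h => h.1, fun hy => ?_⟩
        obtain ⟨a, ha, hay⟩ := key hii y hy
        exact ⟨hy, a, ha, hay⟩
      obtain ⟨b₀, hb₀⟩ := hB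
      obtain ⟨a₀, ha₀, ha₀b₀⟩ := key hii b₀ hb₀
      have ha₀A0 : a₀ ∈ proxA A B := ⟨ha₀, b₀, hb₀, ha₀b₀⟩
      have hA0ne : (proxA A B).Nonempty := ⟨a₀, ha₀A0⟩
      have hall : ∀ a ∈ proxA A B, ∀ b ∈ proxB A B, dist a b = setDist A B := by
        rintro a ⟨haA, b', hb', hab'⟩ b hb
        refine le_antisymm ?_ (setDist_le_dist' haA hb.1)
        exact (utri a b' b).trans (max_le (le_of_eq hab') (hii b' hb' b hb.1))
      have hdiamA0 : ∀ a ∈ proxA A B, ∀ a' ∈ proxA A B, dist a a' ≤ setDist A B := by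
        intro a ha a' ha'
        obtain ⟨haA, b', hb', hab'⟩ := ha
        have h1 : dist a' b' = setDist A B := hall a' ha' b' ⟨hb', a, haA, hab'⟩
        refine (utri a b' a').trans (max_le (le_of_eq hab') ?_)
        rw [dist_comm]; exact le_of_eq h1
      have hPA : IsProximinal (proxA A B) := by
        intro x
        by_cases hcase : ∃ a' ∈ proxA A B, dist x a' ≤ setDist A B
        · obtain ⟨a', ha', hxa'⟩ := hcase
          obtain ⟨a, ha, hxa⟩ := hAprox x
          obtain ⟨ha'A, b', hb', ha'b'⟩ := ha'
          have hxb' : dist x b' ≤ setDist A B :=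
            (utri x a' b').trans (max_le hxa' (le_of_eq ha'b'))
          have hxaLe : dist x a ≤ setDist A B := by
            rw [hxa]
            exact (infDist_le_dist_of_mem ha'A).trans hxa'
          have hab' : dist a b' = setDist A B := by
            refine le_antisymm ?_ (setDist_le_dist' ha hb')
            refine (utri a x b').trans (max_le ?_ hxb')
            rw [dist_comm]; exact hxaLe
          have haA0 : a ∈ proxA A B := ⟨ha, b', hb', hab'⟩
          refine ⟨a, haA0, le_antisymm ?_ (infDist_le_dist_of_mem haA0)⟩
          rw [hxa]
          exact infDist_le_infDist_of_subset (fun z hz => hz.1) ⟨a', ha'A, b', hb', ha'b'⟩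
        · push_neg at hcase
          refine ⟨a₀, ha₀A0, ?_⟩
          have heq : ∀ a ∈ proxA A B, dist x a = dist x a₀ := by
            intro a ha
            have h1 : setDist A B < dist x a := hcase a ha
            have h2 : setDist A B < dist x a₀ := hcase a₀ ha₀A0
            have hd : dist a a₀ ≤ setDist A B := hdiamA0 a ha a₀ ha₀A0
            refine le_antisymm ?_ ?_
            · exact (utri x a₀ a).trans (max_le le_rfl (by
                rw [dist_comm]; exact hd.trans h2.le))
            · exact (utri x a a₀).trans (max_le le_rfl (hd.trans h1.le))
          exact le_antisymm (le_infDist' hA0ne fun a ha => (heq a ha).ge)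
            (infDist_le_dist_of_mem ha₀A0)
      have hb₀B0 : b₀ ∈ proxB A B := ⟨hb₀, a₀, ha₀, ha₀b₀⟩
      have hdistEq : setDist (proxA A B) (proxB A B) = setDist A B := by
        refine le_antisymm ?_ ?_
        · exact (setDist_le_dist' ha₀A0 hb₀B0).trans (le_of_eq (hall a₀ ha₀A0 b₀ hb₀B0))
        · refine le_csInf ⟨dist a₀ b₀, a₀, ha₀A0, b₀, hb₀B0, rfl⟩ ?_
          rintro t ⟨a, ha, b, hb, rfl⟩
          exact le_of_eq (hall a ha b hb).symm
      exact ⟨hPA, by rw [hB0]; exact hBprox, hB0, hdistEq, hall⟩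
    · rintro ⟨-, -, hB0, -, hall⟩
      intro x hx y hy
      have hxB0 : x ∈ proxB A B := by rw [hB0]; exact hx
      have hyB0 : y ∈ proxB A B := by rw [hB0]; exact hy
      obtain ⟨-, a, haA, hax⟩ := hxB0
      have haA0 : a ∈ proxA A B := ⟨haA, x, hx, hax⟩
      have h1 : dist x a = setDist A B := by rw [dist_comm]; exact hax
      have h2 : dist a y = setDist A B := hall a haA0 y hyB0
      exact (utri x a y).trans (max_le (le_of_eq h1) (le_of_eq h2))
  refine ⟨?_, iff2⟩
  constructor
  · rintro ⟨a', ha', h⟩ x hx y hy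
    refine (utri x a' y).trans (max_le ?_ (le_of_eq (h y hy)))
    rw [dist_comm]; exact le_of_eq (h x hx)
  · intro hii
    obtain ⟨b₀, hb₀⟩ := hB
    obtain ⟨a', ha', hab⟩ := key hii b₀ hb₀
    refine ⟨a', ha', fun b hb => le_antisymm ?_ (setDist_le_dist' ha' hb)⟩
    exact (utri a' b₀ b).trans (max_le (le_of_eq hab) (hii b₀ hb₀ b hb))
end

section
/- Let (M,d) be an ultrametric space and let A, B be nonempty spherically complete subsets of M such that δ(B) ≤ dist(A,B). Then A₀ and B₀ are nonempty spherically complete subsets of M. -/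
open Metric

variable {M : Type*} [MetricSpace M]

/-- **Corollary 2.7.** If `A` and `B` are nonempty spherically complete subsets of an
ultrametric space and `δ(B) ≤ dist(A,B)`, then `A₀` and `B₀` are nonempty and
spherically complete. -/
theorem proxPair_sphericallyComplete {M : Type*} [MetricSpace M] [IsUltrametricDist M]
    (A B : Set M) (hA : A.Nonempty) (hB : B.Nonempty)
    (hAsc : SphericallyCompleteSet A) (hBsc : SphericallyCompleteSet B)
    (hδ : ∀ x ∈ B, ∀ y ∈ B, dist x y ≤ setDist A B) :
    (proxA A B).Nonempty ∧ (proxB A B).Nonempty ∧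
      SphericallyCompleteSet (proxA A B) ∧ SphericallyCompleteSet (proxB A B) := by
  obtain ⟨a0, ha0⟩ := hA
  obtain ⟨b0, hb0⟩ := hB
  set D := setDist A B with hDdef
  have hSne : {t : ℝ | ∃ a ∈ A, ∃ b ∈ B, dist a b = t}.Nonempty :=
    ⟨dist a0 b0, a0, ha0, b0, hb0, rfl⟩
  have hSbdd : BddBelow {t : ℝ | ∃ a ∈ A, ∃ b ∈ B, dist a b = t} := by
    refine ⟨0, ?_⟩
    rintro t ⟨a, _, b, _, rfl⟩
    positivity
  have hDle : ∀ a ∈ A, ∀ b ∈ B, D ≤ dist a b := fun a ha b hb =>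
    csInf_le hSbdd ⟨a, ha, b, hb, rfl⟩
  have hconst : ∀ a ∈ A, ∀ b ∈ B, ∀ b' ∈ B, dist a b = dist a b' := by
    have key : ∀ a ∈ A, ∀ b ∈ B, ∀ b' ∈ B, dist a b' ≤ dist a b := by
      intro a ha b hb b' hb'
      calc dist a b' ≤ max (dist a b) (dist b b') := IsUltrametricDist.dist_triangle_max a b b'
        _ ≤ dist a b := max_le le_rfl ((hδ b hb b' hb').trans (hDle a ha b hb))
    exact fun a ha b hb b' hb' => le_antisymm (key a ha b' hb' b hb) (key a ha b hb b' hb')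
  -- construct a point of proxA
  have hex : ∀ n : ℕ, ∃ a ∈ A, dist a b0 < D + 1 / ((n : ℝ) + 1) := by
    intro n
    have h1 : (0:ℝ) < 1 / ((n : ℝ) + 1) := by positivity
    obtain ⟨t, ht, htlt⟩ := exists_lt_of_csInf_lt hSne (lt_add_of_pos_right D h1)
    obtain ⟨a, ha, b, hb, rfl⟩ := ht
    exact ⟨a, ha, by rwa [← hconst a ha b hb b0 hb0]⟩
  choose c hcA hclt using hex
  have hr0 : ∀ n : ℕ, (0:ℝ) ≤ D + 1 / ((n : ℝ) + 1) := by
    intro n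
    have h0 : (0:ℝ) ≤ D := le_csInf hSne (by rintro t ⟨a, _, b, _, rfl⟩; positivity)
    have : (0:ℝ) < 1 / ((n : ℝ) + 1) := by positivity
    linarith
  have hrmono : ∀ n : ℕ, (1:ℝ) / ((n : ℝ) + 1 + 1) ≤ 1 / ((n : ℝ) + 1) := by
    intro n
    apply one_div_le_one_div_of_le <;> [skip; linarith] <;> positivity
  have hnest : ∀ n : ℕ, closedBall (c (n + 1)) (D + 1 / ((n : ℝ) + 1 + 1)) ⊆
      closedBall (c n) (D + 1 / ((n : ℝ) + 1)) := by
    intro n x hx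
    rw [mem_closedBall] at hx ⊢
    have hxb0 : dist x b0 ≤ D + 1 / ((n : ℝ) + 1) := by
      calc dist x b0 ≤ max (dist x (c (n+1))) (dist (c (n+1)) b0) :=
            IsUltrametricDist.dist_triangle_max _ _ _
        _ ≤ D + 1 / ((n : ℝ) + 1) := by
            refine max_le (hx.trans (by linarith [hrmono n])) ?_
            have := hclt (n+1)
            push_cast at this
            linarith [hrmono n]
    calc dist x (c n) ≤ max (dist x b0) (dist b0 (c n)) :=
          IsUltrametricDist.dist_triangle_max _ _ _
      _ ≤ D + 1 / ((n : ℝ) + 1) := by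
          refine max_le hxb0 ?_
          rw [dist_comm]
          exact (hclt n).le
  obtain ⟨a, haA, haI⟩ := hAsc c (fun n => D + 1 / ((n : ℝ) + 1)) hcA hr0
    (fun n => fun x hx => ⟨hx.1, by
      have h := hx.2
      push_cast at h
      exact hnest n h⟩)
  simp only [Set.mem_iInter, mem_closedBall] at haI
  have hab0 : dist a b0 ≤ D := by
    refine le_of_forall_pos_le_add ?_
    intro ε hε
    obtain ⟨n, hn⟩ := exists_nat_one_div_lt hε
    have h1 : dist a b0 ≤ max (dist a (c n)) (dist (c n) b0) :=
      IsUltrametricDist.dist_triangle_max _ _ _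
    have h2 : dist a (c n) ≤ D + 1 / ((n : ℝ) + 1) := haI n
    have h3 : dist (c n) b0 ≤ D + 1 / ((n : ℝ) + 1) := (hclt n).le
    have := max_le h2 h3
    linarith [h1.trans this, hn]
  have hab0' : dist a b0 = D := le_antisymm hab0 (hDle a haA b0 hb0)
  have haprox : a ∈ proxA A B := ⟨haA, b0, hb0, hab0'⟩
  -- proxB = B
  have hBeq : proxB A B = B := by
    ext b
    constructor
    · rintro ⟨hb, -⟩; exact hb
    · intro hb
      exact ⟨hb, a, haA, (hconst a haA b0 hb0 b hb) ▸ hab0'⟩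
  -- characterization of proxA
  have hA0 : ∀ x, x ∈ proxA A B ↔ x ∈ A ∧ dist x b0 ≤ D := by
    intro x
    constructor
    · rintro ⟨hx, y, hy, hxy⟩
      exact ⟨hx, le_of_eq ((hconst x hx b0 hb0 y hy).symm ▸ hxy)⟩
    · rintro ⟨hx, hle⟩
      exact ⟨hx, b0, hb0, le_antisymm hle (hDle x hx b0 hb0)⟩
  refine ⟨⟨a, haprox⟩, ⟨b0, by rw [hBeq]; exact hb0⟩, ?_, by rw [hBeq]; exact hBsc⟩
  -- spherical completeness of proxA
  intro cc rr hcc hrr hnn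
  have hccA : ∀ n, cc n ∈ A := fun n => ((hA0 (cc n)).1 (hcc n)).1
  have hccb0 : ∀ n, dist (cc n) b0 ≤ D := fun n => ((hA0 (cc n)).1 (hcc n)).2
  have hkey : ∀ n, proxA A B ∩ closedBall (cc n) (rr n) =
      A ∩ closedBall (cc n) (min (rr n) D) := by
    intro n
    ext x
    simp only [Set.mem_inter_iff, mem_closedBall, le_min_iff, hA0]
    constructor
    · rintro ⟨⟨hxA, hxb0⟩, hxc⟩
      refine ⟨hxA, hxc, ?_⟩
      calc dist x (cc n) ≤ max (dist x b0) (dist b0 (cc n)) :=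
            IsUltrametricDist.dist_triangle_max _ _ _
        _ ≤ D := max_le hxb0 (by rw [dist_comm]; exact hccb0 n)
    · rintro ⟨hxA, hxc, hxD⟩
      refine ⟨⟨hxA, ?_⟩, hxc⟩
      calc dist x b0 ≤ max (dist x (cc n)) (dist (cc n) b0) :=
            IsUltrametricDist.dist_triangle_max _ _ _
        _ ≤ D := max_le hxD (hccb0 n)
  obtain ⟨y, hyA, hyI⟩ := hAsc cc (fun n => min (rr n) D) hccA
    (fun n => le_min (hrr n) (dist_nonneg.trans (hccb0 n)))
    (fun n => by rw [← hkey n, ← hkey (n+1)]; exact hnn n)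
  simp only [Set.mem_iInter, mem_closedBall] at hyI
  have hy0 : y ∈ proxA A B ∩ closedBall (cc 0) (rr 0) := by
    rw [hkey 0]
    exact ⟨hyA, by simpa using hyI 0⟩
  refine ⟨y, hy0.1, ?_⟩
  simp only [Set.mem_iInter, mem_closedBall]
  exact fun n => (hyI n).trans (min_le_left _ _)
end

section
/- Let (M,d) be an ultrametric space, let A, B be nonempty spherically complete subsets of M with δ(B) ≤ dist(A,B), and let F : A ∪ B → A ∪ B be a noncyclic nonexpansive mapping. Then F(A₀) ⊆ A₀ and F(B₀) ⊆ B₀. -/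
open Metric

variable {M : Type*} [MetricSpace M]

/-- If `A, B` are nonempty spherically complete subsets with `δ(B) ≤ dist(A,B)` and
`F : A ∪ B → A ∪ B` is a noncyclic nonexpansive mapping, then `F(A₀) ⊆ A₀` and
`F(B₀) ⊆ B₀`. -/
theorem prox_invariant_of_noncyclic_nonexpansive {M : Type*} [MetricSpace M]
    [IsUltrametricDist M] (A B : Set M) (hA : A.Nonempty) (hB : B.Nonempty)
    (hAsc : SphericallyCompleteSet A) (hBsc : SphericallyCompleteSet B)
    (hδ : ∀ x ∈ B, ∀ y ∈ B, dist x y ≤ setDist A B)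
    (F : M → M) (hFA : Set.MapsTo F A A) (hFB : Set.MapsTo F B B)
    (hF : ∀ x ∈ A ∪ B, ∀ y ∈ A ∪ B, dist (F x) (F y) ≤ dist x y) :
    Set.MapsTo F (proxA A B) (proxA A B) ∧ Set.MapsTo F (proxB A B) (proxB A B) := by
  have hle : ∀ a ∈ A, ∀ b ∈ B, setDist A B ≤ dist a b := fun a ha b hb =>
    csInf_le ⟨0, by rintro t ⟨a, -, b, -, rfl⟩; exact dist_nonneg⟩ ⟨a, ha, b, hb, rfl⟩
  constructor
  · rintro x ⟨hxA, y, hyB, hxy⟩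
    exact ⟨hFA hxA, F y, hFB hyB, le_antisymm
      ((hF x (Or.inl hxA) y (Or.inr hyB)).trans hxy.le)
      (hle _ (hFA hxA) _ (hFB hyB))⟩
  · rintro y ⟨hyB, x, hxA, hxy⟩
    exact ⟨hFB hyB, F x, hFA hxA, le_antisymm
      ((hF x (Or.inl hxA) y (Or.inr hyB)).trans hxy.le)
      (hle _ (hFA hxA) _ (hFB hyB))⟩
end

section
/- Let (M,d) be an ultrametric space, let A, B be nonempty spherically complete subsets of M with δ(B) ≤ dist(A,B), and let F : A ∪ B → A ∪ B be a noncyclic nonexpansive mapping such that for every x ∈ A ∪ B with x ≠ F(x) one has liminf_{n→∞} d(Fⁿ(x), Fⁿ⁺¹(x)) < d(x, F(x)). Then there exist a ∈ A and b ∈ B such that F(a) = a, F(b) = b and d(a,b) = dist(A,B). -/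
open Metric

variable {M : Type*} [MetricSpace M]

/-- Ultrametric ball inclusion: a closed ball whose center lies in a bigger closed ball
and whose radius is not larger is contained in it. -/
lemma ultra_closedBall_subset [IsUltrametricDist M] {x y : M} {s t : ℝ}
    (hxy : dist y x ≤ t) (hst : s ≤ t) : closedBall y s ⊆ closedBall x t := by
  intro z hz
  simp only [mem_closedBall] at hz ⊢
  calc dist z x ≤ max (dist z y) (dist y x) := IsUltrametricDist.dist_triangle_max z y x
  _ ≤ t := max_le (hz.trans hst) hxy

open Filter in
/-- Key fixed point lemma: a noncyclic nonexpansive map with the liminf condition on a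
spherically complete subset intersected with a suitable "ball-stable" set has a fixed point. -/
lemma fp_lemma [IsUltrametricDist M] (A C : Set M)
    (hAsc : SphericallyCompleteSet A) (x₀ : M) (hx₀ : x₀ ∈ A ∩ C)
    (F : M → M)
    (hFD : Set.MapsTo F (A ∩ C) (A ∩ C))
    (hF : ∀ x ∈ A ∩ C, ∀ y ∈ A ∩ C, dist (F x) (F y) ≤ dist x y)
    (hball : ∀ x ∈ A ∩ C, closedBall x (dist x (F x)) ⊆ C)
    (hliminf : ∀ x ∈ A ∩ C, x ≠ F x →
      liminf (fun n : ℕ => dist (F^[n] x) (F^[n + 1] x)) atTop < dist x (F x)) :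
    ∃ a ∈ A ∩ C, F a = a := by
  set D := A ∩ C with hD
  have hK : ∀ x ∈ D, ∀ y ∈ D, dist y x ≤ dist x (F x) →
      dist (F y) x ≤ dist x (F x) ∧ dist y (F y) ≤ dist x (F x) := by
    intro x hx y hy hyx
    have h1 : dist (F y) x ≤ dist x (F x) := by
      calc dist (F y) x ≤ max (dist (F y) (F x)) (dist (F x) x) :=
            IsUltrametricDist.dist_triangle_max _ _ _
      _ ≤ dist x (F x) := max_le ((hF y hy x hx).trans hyx) (dist_comm (F x) x ▸ le_rfl)
    refine ⟨h1, ?_⟩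
    calc dist y (F y) ≤ max (dist y x) (dist x (F y)) :=
          IsUltrametricDist.dist_triangle_max _ _ _
    _ ≤ dist x (F x) := max_le hyx (dist_comm x (F y) ▸ h1)
  have key : ∀ (n : ℕ) (x : M), x ∈ D → ∃ y, y ∈ D ∧ dist y x ≤ dist x (F x) ∧
      dist y (F y) < sInf ((fun z => dist z (F z)) ''
        (D ∩ closedBall x (dist x (F x)))) + 1 / (n + 1) := by
    intro n x hx
    have hTne : ((fun z => dist z (F z)) '' (D ∩ closedBall x (dist x (F x)))).Nonempty :=
      ⟨dist x (F x), ⟨x, ⟨hx, mem_closedBall_self dist_nonneg⟩, rfl⟩⟩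
    have hpos : (0 : ℝ) < 1 / (n + 1) := by positivity
    obtain ⟨t, ⟨y, ⟨hyD, hyball⟩, rfl⟩, hlt⟩ :=
      exists_lt_of_csInf_lt hTne (lt_add_of_pos_right _ hpos)
    exact ⟨y, hyD, mem_closedBall.mp hyball, hlt⟩
  choose pick hpick1 hpick2 hpick3 using key
  let seq : ℕ → {x : M // x ∈ D} := fun n =>
    Nat.rec ⟨x₀, hx₀⟩ (fun n p => ⟨pick n p.1 p.2, hpick1 n p.1 p.2⟩) n
  set c : ℕ → M := fun n => (seq n).1 with hc
  have hcD : ∀ n, c n ∈ D := fun n => (seq n).2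
  set rad : ℕ → ℝ := fun n => dist (c n) (F (c n)) with hrad
  have hstep2 : ∀ n, dist (c (n + 1)) (c n) ≤ rad n := fun n => hpick2 n (c n) (hcD n)
  have hstep3 : ∀ n, rad (n + 1) < sInf ((fun z => dist z (F z)) ''
      (D ∩ closedBall (c n) (rad n))) + 1 / (n + 1) := fun n => hpick3 n (c n) (hcD n)
  have hradmono : ∀ n, rad (n + 1) ≤ rad n := fun n =>
    (hK (c n) (hcD n) (c (n + 1)) (hcD (n + 1)) (hstep2 n)).2
  have hnest : ∀ n, closedBall (c (n + 1)) (rad (n + 1)) ⊆ closedBall (c n) (rad n) :=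
    fun n => ultra_closedBall_subset (hstep2 n) (hradmono n)
  obtain ⟨z, hzA, hzI⟩ := hAsc c rad (fun n => (hcD n).1) (fun n => dist_nonneg)
    (fun n => Set.inter_subset_inter_right A (hnest n))
  have hz : ∀ n, dist z (c n) ≤ rad n := fun n =>
    mem_closedBall.mp (Set.mem_iInter.mp hzI n)
  have hzC : z ∈ C := hball (c 0) (hcD 0) (mem_closedBall.mpr (hz 0))
  have hzD : z ∈ D := ⟨hzA, hzC⟩
  have horb : ∀ k, F^[k] z ∈ D ∧ ∀ n, dist (F^[k] z) (c n) ≤ rad n := by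
    intro k
    induction k with
    | zero => exact ⟨hzD, hz⟩
    | succ k ih =>
      rw [Function.iterate_succ_apply']
      exact ⟨hFD ih.1, fun n => (hK (c n) (hcD n) (F^[k] z) ih.1 (ih.2 n)).1⟩
  have hrzle : ∀ n, dist z (F z) ≤ rad n := fun n =>
    (hK (c n) (hcD n) z hzD (hz n)).2
  have hlow : ∀ k n, sInf ((fun z => dist z (F z)) '' (D ∩ closedBall (c n) (rad n))) ≤
      dist (F^[k] z) (F (F^[k] z)) := by
    intro k n
    refine csInf_le ⟨0, fun t ht => ?_⟩
      ⟨F^[k] z, ⟨(horb k).1, mem_closedBall.mpr ((horb k).2 n)⟩, rfl⟩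
    obtain ⟨y, _, rfl⟩ := ht
    exact dist_nonneg
  have hmain : ∀ k, dist z (F z) ≤ dist (F^[k] z) (F^[k + 1] z) := by
    intro k
    rw [Function.iterate_succ_apply']
    by_contra hcon
    push_neg at hcon
    obtain ⟨n, hn⟩ :=
      exists_nat_one_div_lt (show (0:ℝ) < dist z (F z) - dist (F^[k] z) (F (F^[k] z)) by
        linarith)
    have h1 : dist z (F z) ≤ rad (n + 1) := hrzle (n + 1)
    have h2 := hstep3 n
    have h3 := hlow k n
    linarith
  by_cases hfz : F z = z
  · exact ⟨z, hzD, hfz⟩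
  · exfalso
    have hlim := hliminf z hzD (fun h => hfz h.symm)
    have hub : ∀ k : ℕ, dist (F^[k] z) (F^[k + 1] z) ≤ dist z (F z) := by
      intro k
      induction k with
      | zero => simp
      | succ k ih =>
        refine le_trans ?_ ih
        rw [Function.iterate_succ_apply' F (k + 1), Function.iterate_succ_apply' F k]
        exact hF _ (horb k).1 _ ((Function.iterate_succ_apply' F k z) ▸ (horb (k + 1)).1)
    have hcob : IsCoboundedUnder (· ≥ ·) atTop
        (fun k : ℕ => dist (F^[k] z) (F^[k + 1] z)) :=
      isCoboundedUnder_ge_of_eventually_le atTop (Eventually.of_forall hub)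
    obtain ⟨k, hk⟩ := (frequently_lt_of_liminf_lt hcob hlim).exists
    exact absurd hk (not_lt.mpr (hmain k))

open Filter in
/-- **Theorem 2.10.** Let `A, B` be nonempty spherically complete subsets of an ultrametric
space with `δ(B) ≤ dist(A,B)`, and let `F : A ∪ B → A ∪ B` be a noncyclic nonexpansive
mapping with `liminf_{n→∞} d(Fⁿ x, Fⁿ⁺¹ x) < d(x, F x)` whenever `x ∈ A ∪ B`, `x ≠ F x`.
Then there are `a ∈ A` and `b ∈ B` with `F a = a`, `F b = b` and `d(a,b) = dist(A,B)`. -/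
theorem fixedPoints_bestProximity {M : Type*} [MetricSpace M] [IsUltrametricDist M]
    (A B : Set M) (hA : A.Nonempty) (hB : B.Nonempty)
    (hAsc : SphericallyCompleteSet A) (hBsc : SphericallyCompleteSet B)
    (hδ : ∀ x ∈ B, ∀ y ∈ B, dist x y ≤ setDist A B)
    (F : M → M) (hFA : Set.MapsTo F A A) (hFB : Set.MapsTo F B B)
    (hF : ∀ x ∈ A ∪ B, ∀ y ∈ A ∪ B, dist (F x) (F y) ≤ dist x y)
    (hliminf : ∀ x ∈ A ∪ B, x ≠ F x →
      liminf (fun n : ℕ => dist (F^[n] x) (F^[n + 1] x)) atTop < dist x (F x)) :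
    ∃ a ∈ A, ∃ b ∈ B, F a = a ∧ F b = b ∧ dist a b = setDist A B := by
  obtain ⟨a₀, ha₀⟩ := hA
  obtain ⟨b₀, hb₀⟩ := hB
  set ρ := setDist A B with hρ
  have hpairNe : {t : ℝ | ∃ a ∈ A, ∃ b ∈ B, dist a b = t}.Nonempty :=
    ⟨dist a₀ b₀, a₀, ha₀, b₀, hb₀, rfl⟩
  have hpairBdd : BddBelow {t : ℝ | ∃ a ∈ A, ∃ b ∈ B, dist a b = t} := by
    refine ⟨0, fun t ht => ?_⟩
    obtain ⟨a, -, b, -, rfl⟩ := ht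
    exact dist_nonneg
  have hρ_le : ∀ a ∈ A, ∀ b' ∈ B, ρ ≤ dist a b' := fun a ha b' hb' =>
    csInf_le hpairBdd ⟨a, ha, b', hb', rfl⟩
  have hρ0 : 0 ≤ ρ := le_csInf hpairNe (fun t ht => by
    obtain ⟨a, -, b, -, rfl⟩ := ht; exact dist_nonneg)
  -- Step 1: a fixed point in B
  obtain ⟨b, hbD, hFb⟩ := fp_lemma B Set.univ hBsc b₀ ⟨hb₀, trivial⟩ F
    (fun x hx => ⟨hFB hx.1, trivial⟩)
    (fun x hx y hy => hF x (Or.inr hx.1) y (Or.inr hy.1))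
    (fun x _ => Set.subset_univ _)
    (fun x hx => hliminf x (Or.inr hx.1))
  have hbB : b ∈ B := hbD.1
  -- Step 2: dist to the fixed point `b` is minimal among points of B
  have hconst : ∀ a ∈ A, ∀ b' ∈ B, dist a b ≤ dist a b' := by
    intro a ha b' hb'
    calc dist a b ≤ max (dist a b') (dist b' b) :=
          IsUltrametricDist.dist_triangle_max a b' b
    _ ≤ dist a b' := max_le le_rfl ((hδ b' hb' b hbB).trans (hρ_le a ha b' hb'))
  -- Step 3: approximate sequence in A toward b
  have hexa : ∀ n : ℕ, ∃ a ∈ A, dist a b < ρ + 1 / (n + 1) := by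
    intro n
    have hpos : (0 : ℝ) < 1 / (n + 1) := by positivity
    obtain ⟨t, ⟨a, ha, b', hb', rfl⟩, hlt⟩ :=
      exists_lt_of_csInf_lt hpairNe (lt_add_of_pos_right ρ hpos)
    exact ⟨a, ha, lt_of_le_of_lt (hconst a ha b' hb') hlt⟩
  choose aseq haseqA haseqd using hexa
  have hradnn : ∀ n : ℕ, (0 : ℝ) ≤ ρ + 1 / (n + 1) := by
    intro n
    have hpos : (0 : ℝ) < 1 / (n + 1) := by positivity
    linarith
  have hnest : ∀ n : ℕ, closedBall (aseq (n + 1)) (ρ + 1 / (n + 1 + 1)) ⊆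
      closedBall (aseq n) (ρ + 1 / (n + 1)) := by
    intro n
    have hmono : ρ + 1 / ((n : ℝ) + 1 + 1) ≤ ρ + 1 / ((n : ℝ) + 1) := by
      have : (1 : ℝ) / ((n : ℝ) + 1 + 1) ≤ 1 / ((n : ℝ) + 1) := by
        apply one_div_le_one_div_of_le
        · positivity
        · linarith
      linarith
    refine ultra_closedBall_subset ?_ hmono
    calc dist (aseq (n + 1)) (aseq n) ≤ max (dist (aseq (n + 1)) b) (dist b (aseq n)) :=
          IsUltrametricDist.dist_triangle_max _ _ _
    _ ≤ ρ + 1 / (n + 1) := by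
        refine max_le ((haseqd (n + 1)).le.trans ?_) ?_
        · push_cast; linarith [hmono]
        · rw [dist_comm]; exact (haseqd n).le
  obtain ⟨a₁, ha₁A, ha₁I⟩ := hAsc aseq (fun n => ρ + 1 / (n + 1)) haseqA hradnn
    (fun n => Set.inter_subset_inter_right A (by push_cast at hnest ⊢; exact hnest n))
  have ha₁d : dist a₁ b ≤ ρ := by
    by_contra hcon
    push_neg at hcon
    obtain ⟨n, hn⟩ := exists_nat_one_div_lt (show (0:ℝ) < dist a₁ b - ρ by linarith)
    have h1 : dist a₁ (aseq n) ≤ ρ + 1 / (n + 1) :=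
      mem_closedBall.mp (Set.mem_iInter.mp ha₁I n)
    have h2 : dist a₁ b ≤ max (dist a₁ (aseq n)) (dist (aseq n) b) :=
      IsUltrametricDist.dist_triangle_max _ _ _
    have h3 := (haseqd n).le
    have : dist a₁ b ≤ ρ + 1 / (n + 1) := h2.trans (max_le h1 h3)
    linarith
  -- Step 4: fixed point in A ∩ closedBall b ρ
  have hCmaps : Set.MapsTo F (A ∩ closedBall b ρ) (A ∩ closedBall b ρ) := by
    intro x hx
    refine ⟨hFA hx.1, mem_closedBall.mpr ?_⟩
    calc dist (F x) b = dist (F x) (F b) := by rw [hFb]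
    _ ≤ dist x b := hF x (Or.inl hx.1) b (Or.inr hbB)
    _ ≤ ρ := mem_closedBall.mp hx.2
  have hCball : ∀ x ∈ A ∩ closedBall b ρ, closedBall x (dist x (F x)) ⊆ closedBall b ρ := by
    intro x hx
    have hFxb : dist (F x) b ≤ ρ := mem_closedBall.mp (hCmaps hx).2
    have hxb : dist x b ≤ ρ := mem_closedBall.mp hx.2
    have hr : dist x (F x) ≤ ρ := by
      calc dist x (F x) ≤ max (dist x b) (dist b (F x)) :=
            IsUltrametricDist.dist_triangle_max _ _ _
      _ ≤ ρ := max_le hxb (dist_comm b (F x) ▸ hFxb)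
    exact ultra_closedBall_subset hxb hr
  obtain ⟨a, haD, hFa⟩ := fp_lemma A (closedBall b ρ) hAsc a₁
    ⟨ha₁A, mem_closedBall.mpr ha₁d⟩ F hCmaps
    (fun x hx y hy => hF x (Or.inl hx.1) y (Or.inl hy.1))
    hCball
    (fun x hx => hliminf x (Or.inl hx.1))
  exact ⟨a, haD.1, b, hbB, hFa, hFb,
    le_antisymm (mem_closedBall.mp haD.2) (hρ_le a haD.1 b hbB)⟩
end

section
/- Let (M,d) be a nonempty spherically complete ultrametric space and let F : M → M be strictly contractive, i.e., d(F(x),F(y)) < d(x,y) whenever x ≠ y. Then F has a unique fixed point. -/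
open Metric

variable {M : Type*} [MetricSpace M]

/-- Auxiliary: existence of an almost-minimizing next center. -/
lemma exists_next_center {M : Type*} [MetricSpace M] (F : M → M) (x : M) {ε : ℝ} (hε : 0 < ε) :
    ∃ y, y ∈ closedBall x (dist x (F x)) ∧ dist y (F y) ≤ dist x (F x) ∧
      dist y (F y) ≤ sInf ((fun z => dist z (F z)) '' closedBall x (dist x (F x))) + ε := by
  set ρ : M → ℝ := fun z => dist z (F z)
  set B := closedBall x (ρ x)
  have hxB : x ∈ B := mem_closedBall_self dist_nonneg
  have hne : (ρ '' B).Nonempty := ⟨ρ x, x, hxB, rfl⟩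
  have hbdd : BddBelow (ρ '' B) := ⟨0, fun t ⟨z, _, hz⟩ => hz ▸ dist_nonneg⟩
  have hlt' : sInf (ρ '' B) < sInf (ρ '' B) + ε := by linarith
  obtain ⟨t, ⟨y, hyB, rfl⟩, hlt⟩ := exists_lt_of_csInf_lt hne hlt'
  by_cases h : ρ y ≤ ρ x
  · exact ⟨y, hyB, h, hlt.le⟩
  · push_neg at h
    refine ⟨x, hxB, le_refl _, ?_⟩
    exact (h.trans hlt).le

/-- In a nonempty spherically complete ultrametric space, every strictly contractive
mapping has a unique fixed point. -/
theorem strictlyContractive_unique_fixedPoint {M : Type*} [MetricSpace M]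
    [IsUltrametricDist M] [Nonempty M] (hM : SphericallyCompleteSpace M)
    (F : M → M) (hF : ∀ x y : M, x ≠ y → dist (F x) (F y) < dist x y) :
    ∃! p : M, F p = p := by
  classical
  set ρ : M → ℝ := fun z => dist z (F z) with hρ
  have hFle : ∀ x y : M, dist (F x) (F y) ≤ dist x y := by
    intro x y
    by_cases h : x = y
    · simp [h]
    · exact (hF x y h).le
  -- build the sequence
  have hstep : ∀ n : ℕ, (0:ℝ) < 1 / (n + 1) := fun n => by positivity
  let seq : ℕ → M := fun n => Nat.rec (Classical.arbitrary M)
    (fun n x => Classical.choose (exists_next_center F x (hstep n))) n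
  have hseq : ∀ n, seq (n + 1) = Classical.choose (exists_next_center F (seq n) (hstep n)) :=
    fun n => rfl
  have hspec : ∀ n, seq (n + 1) ∈ closedBall (seq n) (ρ (seq n)) ∧
      ρ (seq (n + 1)) ≤ ρ (seq n) ∧
      ρ (seq (n + 1)) ≤ sInf (ρ '' closedBall (seq n) (ρ (seq n))) + 1 / (n + 1) := by
    intro n
    rw [hseq n]
    exact Classical.choose_spec (exists_next_center F (seq n) (hstep n))
  set c : ℕ → M := seq
  set r : ℕ → ℝ := fun n => ρ (seq n)
  have hr0 : ∀ n, 0 ≤ r n := fun n => dist_nonneg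
  have hnest : ∀ n, closedBall (c (n + 1)) (r (n + 1)) ⊆ closedBall (c n) (r n) := by
    intro n z hz
    rw [mem_closedBall] at *
    calc dist z (c n) ≤ max (dist z (c (n + 1))) (dist (c (n + 1)) (c n)) :=
          IsUltrametricDist.dist_triangle_max _ _ _
      _ ≤ r n := by
          apply max_le
          · exact hz.trans ((hspec n).2.1)
          · exact (hspec n).1
  obtain ⟨z, hz⟩ := hM c r hr0 hnest
  simp only [Set.mem_iInter, mem_closedBall] at hz
  -- ρ z ≤ r n for all n
  have hρz : ∀ n, ρ z ≤ r n := by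
    intro n
    calc dist z (F z) ≤ max (dist z (c n)) (dist (c n) (F z)) :=
          IsUltrametricDist.dist_triangle_max _ _ _
      _ ≤ r n := by
          apply max_le (hz n)
          calc dist (c n) (F z) ≤ max (dist (c n) (F (c n))) (dist (F (c n)) (F z)) :=
                IsUltrametricDist.dist_triangle_max _ _ _
            _ ≤ r n := max_le (le_refl _) ((hFle (c n) z).trans ((dist_comm z (c n)) ▸ hz n))
  -- F z belongs to every ball
  have hFz : ∀ n, F z ∈ closedBall (c n) (r n) := by
    intro n
    rw [mem_closedBall]
    calc dist (F z) (c n) ≤ max (dist (F z) z) (dist z (c n)) :=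
          IsUltrametricDist.dist_triangle_max _ _ _
      _ ≤ r n := max_le ((dist_comm z (F z)) ▸ hρz n) (hz n)
  -- ρ z ≤ ρ (F z)
  have hkey : ρ z ≤ ρ (F z) := by
    have h1 : ∀ n : ℕ, ρ z ≤ ρ (F z) + 1 / (n + 1) := by
      intro n
      have hbdd : BddBelow (ρ '' closedBall (c n) (r n)) :=
        ⟨0, fun t ⟨w, _, hw⟩ => hw ▸ dist_nonneg⟩
      have h2 : sInf (ρ '' closedBall (c n) (r n)) ≤ ρ (F z) :=
        csInf_le hbdd ⟨F z, hFz n, rfl⟩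
      have h3 := (hspec n).2.2
      calc ρ z ≤ r (n + 1) := hρz (n + 1)
        _ ≤ sInf (ρ '' closedBall (c n) (r n)) + 1 / (n + 1) := h3
        _ ≤ ρ (F z) + 1 / (n + 1) := by linarith
    refine le_of_forall_pos_le_add fun ε hε => ?_
    obtain ⟨n, hn⟩ := exists_nat_one_div_lt hε
    exact (h1 n).trans (by linarith)
  -- conclude fixed point
  have hfix : F z = z := by
    by_contra h
    have h' : z ≠ F z := fun e => h e.symm
    have := hF z (F z) h'
    simp only [hρ] at hkey
    linarith
  refine ⟨z, hfix, fun q hq => ?_⟩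
  by_contra hne
  have := hF q z hne
  rw [hq, hfix] at this
  exact lt_irrefl _ this
end

section
/- Let (M,d) be an ultrametric space, let A, B be nonempty spherically complete subsets of M with δ(B) ≤ dist(A,B), and suppose there is a noncyclic strictly contractive mapping F : A ∪ B → A ∪ B. Then F has a unique fixed point p and the equalities B = B₀ = A₀ = {p} hold. -/
open Metric

variable {M : Type*} [MetricSpace M]

section Aux

variable [IsUltrametricDist M]

private lemma ultra_ball_subset {x y : M} {r r' : ℝ} (h1 : dist x y ≤ r') (h2 : r ≤ r') :
    closedBall x r ⊆ closedBall y r' := by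
  intro z hz
  rw [mem_closedBall] at *
  calc dist z y ≤ max (dist z x) (dist x y) := IsUltrametricDist.dist_triangle_max z x y
    _ ≤ r' := max_le (hz.trans h2) h1

private lemma ultra_ball_subset_of_comp {x y : M} {r r' : ℝ} (hr' : 0 ≤ r')
    (hc : closedBall x r ⊆ closedBall y r' ∨ closedBall y r' ⊆ closedBall x r) (h : r ≤ r') :
    closedBall x r ⊆ closedBall y r' := by
  rcases hc with hc | hc
  · exact hc
  · have hy : y ∈ closedBall x r := hc (mem_closedBall_self hr')
    rw [mem_closedBall] at hy
    exact ultra_ball_subset (by rw [dist_comm]; exact hy.trans h) h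

/-- Priess-Crampe fixed point theorem: a strictly contractive self-map of a nonempty
spherically complete subset of an ultrametric space has a fixed point. -/
private lemma exists_fixedPt (S : Set M) (hS : S.Nonempty) (hsc : SphericallyCompleteSet S)
    (F : M → M) (hFS : Set.MapsTo F S S)
    (hF : ∀ x ∈ S, ∀ y ∈ S, x ≠ y → dist (F x) (F y) < dist x y) :
    ∃ p ∈ S, F p = p := by
  classical
  set r : M → ℝ := fun x => dist x (F x) with hr
  set bal : M → Set M := fun x => closedBall x (r x) with hbal
  set 𝒮 : Set (Set M) := {s | ∃ x ∈ S, s = bal x} with h𝒮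
  obtain ⟨a₀, ha₀⟩ := hS
  -- Zorn's lemma chain condition
  have hzorn : ∀ c ⊆ 𝒮, IsChain (· ⊆ ·) c → ∃ lb ∈ 𝒮, ∀ s ∈ c, lb ⊆ s := by
    intro c hc𝒮 hchain
    by_cases hcne : c.Nonempty
    swap
    · exact ⟨bal a₀, ⟨a₀, ha₀, rfl⟩, fun s hs => absurd ⟨s, hs⟩ hcne⟩
    set P : Set M := {x | x ∈ S ∧ bal x ∈ c} with hP
    have hrepr : ∀ s ∈ c, ∃ x ∈ P, s = bal x := by
      intro s hs
      obtain ⟨x, hxS, hxeq⟩ := hc𝒮 hs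
      exact ⟨x, ⟨hxS, hxeq ▸ hs⟩, hxeq⟩
    have hPne : P.Nonempty := by
      obtain ⟨s, hs⟩ := hcne
      obtain ⟨x, hxP, _⟩ := hrepr s hs
      exact ⟨x, hxP⟩
    -- comparability key fact
    have hkey : ∀ x ∈ P, ∀ y ∈ P, r x ≤ r y → bal x ⊆ bal y := by
      intro x hx y hy hle
      by_cases heq : bal x = bal y
      · exact heq ▸ subset_rfl
      · exact ultra_ball_subset_of_comp (dist_nonneg.trans hle)
          (hchain hx.2 hy.2 heq) hle
    set R : Set ℝ := r '' P with hR
    have hRne : R.Nonempty := hPne.image r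
    have hRbdd : BddBelow R := ⟨0, fun t ⟨x, _, hxt⟩ => hxt ▸ dist_nonneg⟩
    set ρ : ℝ := sInf R with hρ
    have hρle : ∀ x ∈ P, ρ ≤ r x := fun x hx => csInf_le hRbdd ⟨x, hx, rfl⟩
    by_cases hmin : ∃ x ∈ P, ∀ y ∈ P, r x ≤ r y
    · -- minimum attained: that ball is a lower bound
      obtain ⟨x, hxP, hxmin⟩ := hmin
      refine ⟨bal x, ⟨x, hxP.1, rfl⟩, fun s hs => ?_⟩
      obtain ⟨y, hyP, hyeq⟩ := hrepr s hs
      exact hyeq ▸ hkey x hxP y hyP (hxmin y hyP)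
    · push_neg at hmin
      have hρlt : ∀ x ∈ P, ρ < r x := by
        intro x hx
        obtain ⟨y, hyP, hylt⟩ := hmin x hx
        exact lt_of_le_of_lt (hρle y hyP) hylt
      -- build a decreasing sequence of balls with radii tending to ρ
      have hstep : ∀ (x : ↥P) (n : ℕ), ∃ y : ↥P, r ↑y < r ↑x ∧ r ↑y < ρ + 1 / (n + 1) := by
        intro x n
        have h1 : (0:ℝ) < 1 / (n + 1) := by positivity
        have h2 : sInf R < min (r ↑x) (ρ + 1 / (n + 1)) :=
          lt_min (hρlt _ x.2) (lt_add_of_pos_right _ h1)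
        obtain ⟨t, ⟨y, hyP, hyt⟩, htlt⟩ := exists_lt_of_csInf_lt hRne h2
        exact ⟨⟨y, hyP⟩, hyt ▸ (lt_min_iff.mp htlt).1, hyt ▸ (lt_min_iff.mp htlt).2⟩
      choose g hg1 hg2 using hstep
      obtain ⟨p₀, hp₀⟩ := hPne
      set x : ℕ → ↥P := fun n => Nat.rec (g ⟨p₀, hp₀⟩ 0) (fun k xk => g xk (k + 1)) n with hx
      have hx0 : x 0 = g ⟨p₀, hp₀⟩ 0 := rfl
      have hxsucc : ∀ n, x (n + 1) = g (x n) (n + 1) := fun n => rfl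
      have hxlt : ∀ n, r ↑(x n) < ρ + 1 / (n + 1) := by
        intro n
        cases n with
        | zero => simpa [hx0] using hg2 ⟨p₀, hp₀⟩ 0
        | succ k => simpa using hg2 (x k) (k + 1)
      have hxdec : ∀ n, r ↑(x (n + 1)) < r ↑(x n) := fun n => hg1 (x n) (n + 1)
      have hnest : ∀ n, bal ↑(x (n + 1)) ⊆ bal ↑(x n) :=
        fun n => hkey _ (x (n + 1)).2 _ (x n).2 (hxdec n).le
      obtain ⟨z, hzS, hzball⟩ := hsc (fun n => ↑(x n)) (fun n => r ↑(x n))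
        (fun n => (x n).2.1) (fun n => dist_nonneg)
        (fun n => Set.inter_subset_inter_right S (hnest n))
      rw [Set.mem_iInter] at hzball
      -- z is in every ball of the chain
      have hzy : ∀ y ∈ P, dist z y ≤ r y := by
        intro y hyP
        by_contra hcon
        push_neg at hcon
        set ε : ℝ := (dist z y - r y) / 2 with hε
        have hεpos : 0 < ε := by simp only [hε]; linarith
        obtain ⟨n, hn⟩ := exists_nat_one_div_lt hεpos
        have hor : bal ↑(x n) ⊆ bal y ∨ bal y ⊆ bal ↑(x n) := by
          by_cases heq : bal ↑(x n) = bal y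
          · exact Or.inl (heq ▸ subset_rfl)
          · exact hchain (x n).2.2 hyP.2 heq
        rcases hor with hsub | hsub
        · have := hsub (hzball n)
          rw [mem_closedBall] at this
          linarith
        · have hy' : y ∈ bal ↑(x n) := hsub (mem_closedBall_self dist_nonneg)
          rw [mem_closedBall] at hy'
          have hz' := hzball n
          rw [mem_closedBall] at hz'
          have h1 : dist z y ≤ max (dist z ↑(x n)) (dist ↑(x n) y) :=
            IsUltrametricDist.dist_triangle_max z ↑(x n) y
          rw [dist_comm (↑(x n) : M) y] at h1
          have h2 : dist z y ≤ r ↑(x n) := h1.trans (max_le hz' hy')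
          have h3 := hxlt n
          have h4 := hρle y hyP
          linarith
      have hrz : ∀ y ∈ P, r z ≤ r y := by
        intro y hyP
        by_cases hzeq : z = y
        · exact hzeq ▸ le_rfl
        · have h1 : dist z (F z) ≤ max (dist z y) (dist y (F z)) :=
            IsUltrametricDist.dist_triangle_max z y (F z)
          have h2 : dist y (F z) ≤ max (dist y (F y)) (dist (F y) (F z)) :=
            IsUltrametricDist.dist_triangle_max y (F y) (F z)
          have h3 : dist (F y) (F z) < dist y z := hF y hyP.1 z hzS (fun h => hzeq h.symm)
          have h4 : dist y z ≤ r y := by rw [dist_comm]; exact hzy y hyP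
          have h5 : dist y (F z) ≤ r y := h2.trans (max_le le_rfl (by linarith))
          exact h1.trans (max_le (hzy y hyP) h5)
      refine ⟨bal z, ⟨z, hzS, rfl⟩, fun s hs => ?_⟩
      obtain ⟨y, hyP, hyeq⟩ := hrepr s hs
      exact hyeq ▸ ultra_ball_subset (hzy y hyP) (hrz y hyP)
  obtain ⟨m, hm⟩ := zorn_superset 𝒮 hzorn
  obtain ⟨p, hpS, hpeq⟩ := hm.1
  refine ⟨p, hpS, ?_⟩
  by_contra hne
  have hFp : F p ∈ S := hFS hpS
  have hsub : bal (F p) ⊆ bal p := by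
    apply ultra_ball_subset (by rw [dist_comm])
    exact (hF p hpS (F p) hFp (fun h => hne h.symm)).le
  have hmin := hm.2 ⟨F p, hFp, rfl⟩ (hpeq ▸ hsub)
  rw [hpeq] at hmin
  have hpmem : p ∈ bal (F p) := hmin (mem_closedBall_self dist_nonneg)
  rw [mem_closedBall] at hpmem
  have : dist (F p) (F (F p)) < dist p (F p) := hF p hpS (F p) hFp (fun h => hne h.symm)
  rw [dist_comm p (F p)] at hpmem
  simp only [hr] at hpmem this
  rw [dist_comm (F p) p] at hpmem
  linarith

end Aux

/-- **Theorem 2.11.** Let `A, B` be nonempty spherically complete subsets of an ultrametric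
space with `δ(B) ≤ dist(A,B)`. If `F : A ∪ B → A ∪ B` is noncyclic and strictly
contractive, then `F` has a unique fixed point `p` (in `A ∪ B`) and
`B = B₀ = A₀ = {p}`. -/
theorem strictlyContractive_noncyclic_unique_fixedPoint {M : Type*} [MetricSpace M]
    [IsUltrametricDist M] (A B : Set M) (hA : A.Nonempty) (hB : B.Nonempty)
    (hAsc : SphericallyCompleteSet A) (hBsc : SphericallyCompleteSet B)
    (hδ : ∀ x ∈ B, ∀ y ∈ B, dist x y ≤ setDist A B)
    (F : M → M) (hFA : Set.MapsTo F A A) (hFB : Set.MapsTo F B B)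
    (hF : ∀ x ∈ A ∪ B, ∀ y ∈ A ∪ B, x ≠ y → dist (F x) (F y) < dist x y) :
    ∃ p ∈ A ∪ B, F p = p ∧ (∀ q ∈ A ∪ B, F q = q → q = p) ∧
      B = {p} ∧ proxB A B = {p} ∧ proxA A B = {p} := by
  obtain ⟨p, hpA, hpfix⟩ := exists_fixedPt A hA hAsc F hFA
    (fun x hx y hy => hF x (Or.inl hx) y (Or.inl hy))
  obtain ⟨q, hqB, hqfix⟩ := exists_fixedPt B hB hBsc F hFB
    (fun x hx y hy => hF x (Or.inr hx) y (Or.inr hy))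
  have hpq : p = q := by
    by_contra hne
    have := hF p (Or.inl hpA) q (Or.inr hqB) hne
    rw [hpfix, hqfix] at this
    exact lt_irrefl _ this
  have hpB : p ∈ B := hpq ▸ hqB
  -- setDist A B = 0
  have h0mem : (0:ℝ) ∈ {t : ℝ | ∃ a ∈ A, ∃ b ∈ B, dist a b = t} :=
    ⟨p, hpA, p, hpB, dist_self p⟩
  have hbdd : BddBelow {t : ℝ | ∃ a ∈ A, ∃ b ∈ B, dist a b = t} := by
    refine ⟨0, fun t ht => ?_⟩
    obtain ⟨a, _, b, _, hab⟩ := ht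
    exact hab ▸ dist_nonneg
  have hd0 : setDist A B = 0 := by
    refine le_antisymm (csInf_le hbdd h0mem) (le_csInf ⟨0, h0mem⟩ fun t ht => ?_)
    obtain ⟨a, _, b, _, hab⟩ := ht
    exact hab ▸ dist_nonneg
  have hBp : B = {p} := by
    ext b
    simp only [Set.mem_singleton_iff]
    constructor
    · intro hb
      have := hδ b hb p hpB
      rw [hd0] at this
      exact dist_le_zero.mp (this)
    · rintro rfl; exact hpB
  refine ⟨p, Or.inl hpA, hpfix, ?_, hBp, ?_, ?_⟩
  · intro x hx hxfix
    by_contra hne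
    have := hF x hx p (Or.inl hpA) hne
    rw [hxfix, hpfix] at this
    exact lt_irrefl _ this
  · ext y
    simp only [proxB, Set.mem_setOf_eq, Set.mem_singleton_iff]
    constructor
    · rintro ⟨hyB, -⟩
      rw [hBp] at hyB; exact hyB
    · intro h
      rw [h]
      exact ⟨hpB, p, hpA, by rw [dist_self, hd0]⟩
  · ext x
    simp only [proxA, Set.mem_setOf_eq, Set.mem_singleton_iff]
    constructor
    · rintro ⟨hxA, y, hyB, hxy⟩
      rw [hd0] at hxy
      have hxeqy : x = y := dist_le_zero.mp hxy.le
      rw [hBp] at hyB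
      exact hxeqy.trans hyB
    · intro h
      rw [h]
      exact ⟨hpA, p, hpB, by rw [dist_self, hd0]⟩
end

section
/- Let (M,d) be an ultrametric space, let A be a nonempty spherically complete subspace of M, and let F : M → M be a mapping having a fixed point b* ∈ M. Assume that F is strictly contractive on A ∪ {b*} (i.e., d(F(x),F(y)) < d(x,y) for all distinct x,y ∈ A ∪ {b*}) and that A is F-invariant (F(A) ⊆ A). Then b* ∈ A. -/
open Metric

variable {M : Type*} [MetricSpace M]

/-- **Corollary 2.12.** Let `A` be a nonempty spherically complete subspace of an
ultrametric space `M` and let `F : M → M` have a fixed point `b*`. If `F` is strictly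
contractive on `A ∪ {b*}` and `A` is `F`-invariant, then `b* ∈ A`. -/
theorem fixedPoint_mem_of_strictlyContractive {M : Type*} [MetricSpace M]
    [IsUltrametricDist M] (A : Set M) (hA : A.Nonempty)
    (hAsc : SphericallyCompleteSet A) (F : M → M) (b' : M) (hfix : F b' = b')
    (hF : ∀ x ∈ A ∪ {b'}, ∀ y ∈ A ∪ {b'}, x ≠ y → dist (F x) (F y) < dist x y)
    (hFA : Set.MapsTo F A A) :
    b' ∈ A := by
  by_contra hb
  set δ := infDist b' A with hδ
  have hδ0 : 0 ≤ δ := infDist_nonneg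
  have hex : ∀ n : ℕ, ∃ a ∈ A, dist b' a < δ + 1 / (n + 1) := by
    intro n
    refine (infDist_lt_iff hA).mp ?_
    have : (0:ℝ) < 1 / (n + 1) := by positivity
    linarith
  choose c hc hcd using hex
  set r : ℕ → ℝ := fun n => δ + 1 / (n + 1) with hr
  have hr0 : ∀ n, 0 ≤ r n := by
    intro n; have : (0:ℝ) < 1 / (n + 1) := by positivity
    simp only [hr]; linarith
  have hrmono : ∀ n, r (n + 1) ≤ r n := by
    intro n
    have : (1:ℝ) / (n + 1 + 1) ≤ 1 / (n + 1) := by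
      apply one_div_le_one_div_of_le <;> push_cast <;> linarith
    simp only [hr]; push_cast; linarith
  have hnest : ∀ n, A ∩ closedBall (c (n + 1)) (r (n + 1)) ⊆ A ∩ closedBall (c n) (r n) := by
    intro n x hx
    obtain ⟨hxA, hx⟩ := hx
    refine ⟨hxA, ?_⟩
    rw [mem_closedBall] at hx ⊢
    have h1 : dist (c (n + 1)) (c n) ≤ r n := by
      refine (dist_triangle_max (c (n+1)) b' (c n)).trans (max_le ?_ ?_)
      · rw [dist_comm]; exact le_trans (hcd (n+1)).le (hrmono n)
      · exact (hcd n).le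
    refine (dist_triangle_max x (c (n+1)) (c n)).trans (max_le ?_ h1)
    exact hx.trans (hrmono n)
  obtain ⟨z, hzA, hz⟩ := hAsc c r hc hr0 hnest
  have hz' : ∀ n, dist z (c n) ≤ r n := by
    intro n
    have := Set.mem_iInter.mp hz n
    rwa [mem_closedBall] at this
  have hzb : dist z b' ≤ δ := by
    refine le_of_forall_pos_le_add (fun ε hε => ?_)
    obtain ⟨n, hn⟩ := exists_nat_one_div_lt hε
    have h1 : dist z b' ≤ r n := by
      refine (dist_triangle_max z (c n) b').trans (max_le (hz' n) ?_)
      rw [dist_comm]; exact (hcd n).le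
    have : r n ≤ δ + ε := by simp only [hr]; linarith
    linarith
  have hδle : δ ≤ dist z b' := by rw [dist_comm]; exact infDist_le_dist_of_mem hzA
  have hzb' : dist z b' = δ := le_antisymm hzb hδle
  have hzne : z ≠ b' := fun h => hb (h ▸ hzA)
  have h1 : dist (F z) (F b') < δ := by
    rw [← hzb']; exact hF z (Or.inl hzA) b' (Or.inr rfl) hzne
  have h2 : δ ≤ dist (F z) b' := by
    rw [dist_comm]; exact infDist_le_dist_of_mem (hFA hzA)
  rw [hfix] at h1; linarith
end
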